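/- Let β, c > 0 and define p1(λ) = ((1-βλ)/c)·(1 - 1/√(λ+1))² on [0, 1/β]. Then there exists a unique λ1 ∈ (0, 1/β) solving β·(1 - 1/√(λ+1)) = (1-βλ)·(λ+1)^{-3/2}, and p1'(λ) > 0 on (0, λ1), p1'(λ) < 0 on (λ1, 1/β), so p1 attains its maximum on [0, 1/β] at λ1. -/

import Mathlib

open Real Set

lemma rpow32 {x:ℝ} (hx: 0<x) : x ^ (-(3:ℝ)/2) = 1/(x * Real.sqrt x) := by
  rw [show (-(3:ℝ)/2) = -(1 + 1/2) by ring, Real.rpow_neg hx.le, Real.rpow_add hx,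
    Real.rpow_one, ← Real.sqrt_eq_rpow]
  rw [one_div]

lemma hasDerivP1 (β c : ℝ) (hc : c ≠ 0) {lam : ℝ} (h : -1 < lam) :
    HasDerivAt (fun lam => ((1-β*lam)/c) * (1 - 1/Real.sqrt (lam+1))^2)
      ((1 - 1/Real.sqrt (lam+1))/c *
        ((1-β*lam)/((lam+1)*Real.sqrt (lam+1)) - β * (1 - 1/Real.sqrt (lam+1)))) lam := by
  have hu : (0:ℝ) < lam + 1 := by linarith
  have hsp : 0 < Real.sqrt (lam+1) := Real.sqrt_pos.mpr hu
  have hs2 : Real.sqrt (lam+1) ^ 2 = lam + 1 := Real.sq_sqrt hu.le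
  have hsqrt : HasDerivAt (fun x : ℝ => Real.sqrt (x+1)) (1/(2*Real.sqrt (lam+1))) lam := by
    have := (Real.hasDerivAt_sqrt (x := lam+1) (by positivity)).comp lam
      ((hasDerivAt_id lam).add_const 1)
    simpa [Function.comp_def] using this
  have hq : HasDerivAt (fun x : ℝ => 1 - 1/Real.sqrt (x+1))
      (1/(2*(lam+1)*Real.sqrt (lam+1))) lam := by
    have hinv := hsqrt.fun_inv hsp.ne'
    have := (hasDerivAt_const lam (1:ℝ)).fun_sub hinv
    rw [show (fun x : ℝ => 1 - 1/Real.sqrt (x+1)) = fun i => 1 - (Real.sqrt (i+1))⁻¹ by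
      simp only [one_div]]
    refine this.congr_deriv ?_
    rw [hs2]; field_simp; ring
  have hl : HasDerivAt (fun x : ℝ => (1-β*x)/c) (-β/c) lam := by
    have : HasDerivAt (fun x : ℝ => 1-β*x) (-β) lam := by
      simpa using ((hasDerivAt_const lam (1:ℝ)).fun_sub ((hasDerivAt_id' lam).const_mul β))
    exact this.div_const c
  have := hl.fun_mul (hq.fun_pow 2)
  refine this.congr_deriv ?_
  set S := Real.sqrt (lam+1) with hSdef
  rw [← hs2]
  have hS : S ≠ 0 := hsp.ne'
  norm_num
  field_simp
  ring

lemma gStrictMono (β : ℝ) (hβ : 0 < β) :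
    StrictMonoOn (fun lam => β*(1 - 1/Real.sqrt (lam+1)) - (1-β*lam)/((lam+1)*Real.sqrt (lam+1)))
      (Set.Icc 0 (1/β)) := by
  intro x hx y hy hxy
  have hx1 : (0:ℝ) < x + 1 := by linarith [hx.1]
  have hy1 : (0:ℝ) < y + 1 := by linarith [hy.1]
  have hsx : 1 ≤ Real.sqrt (x+1) := Real.one_le_sqrt.mpr (by linarith [hx.1])
  have hsy : 1 ≤ Real.sqrt (y+1) := Real.one_le_sqrt.mpr (by linarith [hy.1])
  have hss : Real.sqrt (x+1) < Real.sqrt (y+1) := Real.sqrt_lt_sqrt hx1.le (by linarith)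
  have h1 : β*(1 - 1/Real.sqrt (x+1)) < β*(1 - 1/Real.sqrt (y+1)) := by
    apply mul_lt_mul_of_pos_left _ hβ
    have : 1/Real.sqrt (y+1) < 1/Real.sqrt (x+1) :=
      one_div_lt_one_div_of_lt (by linarith) hss
    linarith
  have hax : 0 < (x+1) * Real.sqrt (x+1) := by positivity
  have hay : 0 < (y+1) * Real.sqrt (y+1) := by positivity
  have hab : (x+1) * Real.sqrt (x+1) < (y+1) * Real.sqrt (y+1) := by
    apply mul_lt_mul' (by linarith) hss (by positivity) (by linarith)
  have hby : 0 ≤ 1 - β*y := by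
    have := hy.2
    rw [le_div_iff₀ hβ] at this
    linarith [mul_comm β y ▸ this]
  have hbx : 1 - β*y < 1 - β*x := by nlinarith
  have h2 : (1-β*y)/((y+1)*Real.sqrt (y+1)) < (1-β*x)/((x+1)*Real.sqrt (x+1)) := by
    calc (1-β*y)/((y+1)*Real.sqrt (y+1)) ≤ (1-β*y)/((x+1)*Real.sqrt (x+1)) := by
          apply div_le_div_of_nonneg_left hby hax hab.le
      _ < (1-β*x)/((x+1)*Real.sqrt (x+1)) :=
          div_lt_div_of_pos_right hbx hax
  simp only
  linarith

theorem stmt5 (β c : ℝ) (hβ : 0 < β) (hc : 0 < c) :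
    let p1 : ℝ → ℝ := fun lam => ((1-β*lam)/c) * (1 - 1/Real.sqrt (lam+1))^2
    ∃ lam1 ∈ Set.Ioo 0 (1/β),
      (β * (1 - 1/Real.sqrt (lam1+1)) = (1-β*lam1) * (lam1+1) ^ (-(3:ℝ)/2)) ∧
      (∀ lam ∈ Set.Ioo 0 (1/β),
        β * (1 - 1/Real.sqrt (lam+1)) = (1-β*lam) * (lam+1) ^ (-(3:ℝ)/2) → lam = lam1) ∧
      (∀ lam ∈ Set.Ioo 0 lam1, 0 < deriv p1 lam) ∧
      (∀ lam ∈ Set.Ioo lam1 (1/β), deriv p1 lam < 0) ∧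
      (∀ lam ∈ Set.Icc 0 (1/β), p1 lam ≤ p1 lam1) := by
  intro p1
  set g : ℝ → ℝ := fun lam =>
    β*(1 - 1/Real.sqrt (lam+1)) - (1-β*lam)/((lam+1)*Real.sqrt (lam+1)) with hgdef
  have hβ0 : (0:ℝ) < 1/β := by positivity
  have hmono : StrictMonoOn g (Set.Icc 0 (1/β)) := gStrictMono β hβ
  have hScont : Continuous (fun y:ℝ => Real.sqrt (y+1)) :=
    Real.continuous_sqrt.comp (by continuity)
  have hcont : ContinuousOn g (Set.Icc 0 (1/β)) := by
    intro x hx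
    have hx1 : (0:ℝ) < x+1 := by linarith [hx.1]
    have h1 : Real.sqrt (x+1) ≠ 0 := by positivity
    have h2 : (x+1) * Real.sqrt (x+1) ≠ 0 := by positivity
    exact (((continuousAt_const.mul (continuousAt_const.sub
      (continuousAt_const.div hScont.continuousAt h1))).sub
      ((by fun_prop : ContinuousAt (fun y:ℝ => 1 - β*y) x).div
        ((by fun_prop : ContinuousAt (fun y:ℝ => y+1) x).mul hScont.continuousAt) h2)
      ).continuousWithinAt)
  have hg0 : g 0 = -1 := by simp [hgdef]
  have hgβ : 0 < g (1/β) := by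
    have h1 : (1:ℝ) < Real.sqrt (1/β+1) := by
      calc (1:ℝ) = Real.sqrt 1 := Real.sqrt_one.symm
        _ < Real.sqrt (1/β+1) := Real.sqrt_lt_sqrt (by norm_num) (by linarith)
    have h2 : 1/Real.sqrt (1/β+1) < 1 := by
      rw [div_lt_one (by linarith)]; exact h1
    have h3 : (1 - β*(1/β)) = 0 := by field_simp; norm_num
    simp only [hgdef, h3, zero_div]
    have : 0 < β * (1 - 1/Real.sqrt (1/β+1)) := by
      apply mul_pos hβ; linarith
    linarith
  -- IVT
  have hIVT := intermediate_value_Ioo hβ0.le hcont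
  have h0mem : (0:ℝ) ∈ Set.Ioo (g 0) (g (1/β)) := by rw [hg0]; exact ⟨by norm_num, hgβ⟩
  obtain ⟨lam1, hlam1, hglam1⟩ := hIVT h0mem
  -- equation ↔ g = 0
  have heqiff : ∀ lam : ℝ, 0 < lam →
      ((β * (1 - 1/Real.sqrt (lam+1)) = (1-β*lam) * (lam+1) ^ (-(3:ℝ)/2)) ↔ g lam = 0) := by
    intro lam hlam
    rw [rpow32 (by linarith), mul_one_div, hgdef]
    constructor
    · intro h; simp only; rw [h]; ring
    · intro h; simp only at h; linarith
  -- derivative formula and sign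
  have hderiv : ∀ lam : ℝ, -1 < lam →
      deriv p1 lam = (1 - 1/Real.sqrt (lam+1))/c * (-(g lam)) := by
    intro lam hlam
    rw [(hasDerivP1 β c hc.ne' hlam).deriv, hgdef]
    ring
  have hhpos : ∀ lam : ℝ, 0 < lam → 0 < 1 - 1/Real.sqrt (lam+1) := by
    intro lam hlam
    have h1 : (1:ℝ) < Real.sqrt (lam+1) := by
      calc (1:ℝ) = Real.sqrt 1 := Real.sqrt_one.symm
        _ < Real.sqrt (lam+1) := Real.sqrt_lt_sqrt (by norm_num) (by linarith)
    have : 1/Real.sqrt (lam+1) < 1 := by rw [div_lt_one (by linarith)]; exact h1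
    linarith
  have hlam1Icc : lam1 ∈ Set.Icc 0 (1/β) := ⟨hlam1.1.le, hlam1.2.le⟩
  have hpos : ∀ lam ∈ Set.Ioo 0 lam1, 0 < deriv p1 lam := by
    intro lam hlam
    have hmem : lam ∈ Set.Icc 0 (1/β) := ⟨hlam.1.le, by linarith [hlam.2, hlam1.2]⟩
    have hgneg : g lam < 0 := by
      have := hmono hmem hlam1Icc hlam.2
      rw [hglam1] at this; exact this
    rw [hderiv lam (by linarith [hlam.1])]
    exact mul_pos (div_pos (hhpos lam hlam.1) hc) (by linarith)
  have hneg : ∀ lam ∈ Set.Ioo lam1 (1/β), deriv p1 lam < 0 := by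
    intro lam hlam
    have hmem : lam ∈ Set.Icc 0 (1/β) := ⟨by linarith [hlam.1, hlam1.1], hlam.2.le⟩
    have hg : 0 < g lam := by
      have := hmono hlam1Icc hmem hlam.1
      rw [hglam1] at this; exact this
    rw [hderiv lam (by linarith [hlam1.1, hlam.1])]
    have h := hhpos lam (by linarith [hlam1.1, hlam.1])
    have : 0 < (1 - 1/Real.sqrt (lam+1))/c * g lam :=
      mul_pos (div_pos h hc) hg
    linarith
  -- continuity of p1 on nonneg reals
  have hp1cont : ∀ x : ℝ, -1 < x → ContinuousAt p1 x := by
    intro x hx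
    exact (hasDerivP1 β c hc.ne' hx).continuousAt
  have hmonoP : StrictMonoOn p1 (Set.Icc 0 lam1) := by
    apply strictMonoOn_of_deriv_pos (convex_Icc 0 lam1)
    · exact fun x hx => (hp1cont x (by linarith [hx.1])).continuousWithinAt
    · rw [interior_Icc]; exact hpos
  have hantiP : StrictAntiOn p1 (Set.Icc lam1 (1/β)) := by
    apply strictAntiOn_of_deriv_neg (convex_Icc lam1 (1/β))
    · exact fun x hx => (hp1cont x (by linarith [hx.1, hlam1.1])).continuousWithinAt
    · rw [interior_Icc]; exact hneg
  refine ⟨lam1, hlam1, ?_, ?_, hpos, hneg, ?_⟩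
  · exact (heqiff lam1 hlam1.1).mpr hglam1
  · intro lam hlam heq
    have h1 : g lam = 0 := (heqiff lam hlam.1).mp heq
    exact hmono.injOn ⟨hlam.1.le, hlam.2.le⟩ hlam1Icc (h1.trans hglam1.symm)
  · intro lam hlam
    rcases le_or_gt lam lam1 with h | h
    · exact hmonoP.monotoneOn ⟨hlam.1, h⟩ ⟨hlam1.1.le, le_refl _⟩ h
    · exact (hantiP.antitoneOn ⟨le_refl _, hlam1.2.le⟩ ⟨h.le, hlam.2⟩ h.le)
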